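/- Let T be a positive bounded operator on a complex Hilbert space H. If the essential spectrum of T is a singleton {β} and the interval (β, ‖T‖] contains only finitely many eigenvalues of T, then the range of T is closed. -/

import Mathlib

open ContinuousLinearMap MeasureTheory

variable {E F : Type*} [NormedAddCommGroup E] [InnerProductSpace ℂ E] [CompleteSpace E]
  [NormedAddCommGroup F] [InnerProductSpace ℂ F] [CompleteSpace F]

/-- The point spectrum (set of eigenvalues). -/
def pointSpec (T : E →L[ℂ] E) : Set ℂ := {l | ∃ x : E, x ≠ 0 ∧ T x = l • x}

/-- The essential spectrum of a (self-adjoint) bounded operator: eigenvalues of infinite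
multiplicity, limit points of the point spectrum, and the continuous spectrum. -/
def essSpec (T : E →L[ℂ] E) : Set ℂ :=
  {l | (¬ FiniteDimensional ℂ (LinearMap.ker ((T - l • (1 : E →L[ℂ] E)) : E →ₗ[ℂ] E))) ∨
       l ∈ closure (pointSpec T \ {l}) ∨
       (l ∈ spectrum ℂ T ∧ Function.Injective ⇑(T - l • (1 : E →L[ℂ] E)) ∧
         Dense (Set.range ⇑(T - l • (1 : E →L[ℂ] E))))}

/-- The discrete spectrum: isolated eigenvalues of finite multiplicity. -/
def discSpec (T : E →L[ℂ] E) : Set ℂ :=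
  {l | l ∈ pointSpec T ∧ FiniteDimensional ℂ (LinearMap.ker ((T - l • (1 : E →L[ℂ] E)) : E →ₗ[ℂ] E)) ∧
       l ∉ closure (spectrum ℂ T \ {l})}

/-- The minimum modulus m(T) = inf {‖Tx‖ : ‖x‖ = 1}. -/
noncomputable def minMod (T : E →L[ℂ] F) : ℝ := sInf ((fun x => ‖T x‖) '' {x : E | ‖x‖ = 1})

/-- T attains its minimum modulus. -/
def MinAttain (T : E →L[ℂ] F) : Prop := ∃ x : E, ‖x‖ = 1 ∧ ‖T x‖ = minMod T

/-- T attains its norm. -/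
def NormAttain (T : E →L[ℂ] F) : Prop := ∃ x : E, ‖x‖ = 1 ∧ ‖T x‖ = ‖T‖

/-- T is absolutely minimum attaining (AM). -/
def AbsMinAttain (T : E →L[ℂ] F) : Prop :=
  ∀ M : Submodule ℂ E, IsClosed (M : Set E) → MinAttain (T.comp M.subtypeL)

/-- T is absolutely norm attaining (AN). -/
def AbsNormAttain (T : E →L[ℂ] F) : Prop :=
  ∀ M : Submodule ℂ E, IsClosed (M : Set E) → NormAttain (T.comp M.subtypeL)

/-- S is the Moore-Penrose (generalized) inverse of T. -/
def MoorePenrose (T S : E →L[ℂ] E) : Prop :=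
  T ∘L S ∘L T = T ∧ S ∘L T ∘L S = S ∧ IsSelfAdjoint (T ∘L S) ∧ IsSelfAdjoint (S ∘L T)

/-- T is paranormal: ‖Tx‖² ≤ ‖T²x‖‖x‖ for all x. -/
def Paranormal (T : E →L[ℂ] E) : Prop := ∀ x : E, ‖T x‖ ^ 2 ≤ ‖T (T x)‖ * ‖x‖

variable {H : Type*} [NormedAddCommGroup H] [InnerProductSpace ℂ H] [CompleteSpace H]


-- point spectrum is in spectrum
lemma aux_pointSpec_mem_spectrum (T : H →L[ℂ] H) {z : ℂ} (hz : z ∈ pointSpec T) :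
    z ∈ spectrum ℂ T := by
  obtain ⟨x, hx0, hx⟩ := hz
  rw [spectrum.mem_iff]
  intro hunit
  have hAx : (algebraMap ℂ (H →L[ℂ] H) z - T) x = 0 := by
    simp [Algebra.algebraMap_eq_smul_one, ContinuousLinearMap.sub_apply,
      ContinuousLinearMap.smul_apply, ContinuousLinearMap.one_apply, hx]
  obtain ⟨u, hu⟩ := hunit
  apply hx0
  calc x = ((1 : H →L[ℂ] H)) x := rfl
    _ = ((↑u⁻¹ * ↑u : H →L[ℂ] H)) x := by rw [u.inv_mul]
    _ = (↑u⁻¹ : H →L[ℂ] H) ((↑u : H →L[ℂ] H) x) := rfl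
    _ = 0 := by rw [hu, hAx, map_zero]

-- eigenvalues of positive operators have nonneg real part
lemma aux_pointSpec_re_nonneg {T : H →L[ℂ] H} (hT : T.IsPositive) {z : ℂ}
    (hz : z ∈ pointSpec T) : 0 ≤ z.re := by
  obtain ⟨x, hx0, hx⟩ := hz
  have h := hT.inner_nonneg_left x
  rw [hx] at h
  have : inner ℂ (z • x) x = (starRingEnd ℂ) z * (inner ℂ x x : ℂ) := inner_smul_left x x z
  rw [this] at h
  have hxx : (inner ℂ x x : ℂ) = ((‖x‖ ^ 2 : ℝ) : ℂ) := by
    rw [inner_self_eq_norm_sq_to_K]; norm_cast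
  rw [hxx] at h
  have hre : RCLike.re ((starRingEnd ℂ) z * ((‖x‖ ^ 2 : ℝ) : ℂ)) = z.re * ‖x‖ ^ 2 := by
    simp [Complex.mul_re, ← Complex.ofReal_pow]
  have h : (0:ℝ) ≤ z.re * ‖x‖ ^ 2 := by rw [← hre]; exact (Complex.le_def.mp h).1
  have hx2 : (0:ℝ) < ‖x‖ ^ 2 := by
    have := norm_pos_iff.mpr hx0
    positivity
  nlinarith

-- a spectral point not in the essential spectrum is an eigenvalue
lemma aux_spec_is_eig {T : H →L[ℂ] H} (hsa : IsSelfAdjoint T) {z : ℂ}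
    (hz : z ∈ spectrum ℂ T) (hzb : z ∉ essSpec T) : z ∈ pointSpec T := by
  have hzre : z = (z.re : ℂ) := hsa.mem_spectrum_eq_re hz
  set A : H →L[ℂ] H := T - z • 1 with hA
  have hAsa : IsSelfAdjoint A := by
    apply hsa.sub
    rw [hzre, IsSelfAdjoint, star_smul, star_one]
    simp [Complex.star_def, Complex.conj_ofReal]
  have hAsymm := (ContinuousLinearMap.isSelfAdjoint_iff_isSymmetric).mp hAsa
  have hdense : Function.Injective ⇑A → Dense (Set.range ⇑A) := by
    intro hinj
    have hbot : (LinearMap.range (A : H →ₗ[ℂ] H))ᗮ = ⊥ := by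
      rw [Submodule.eq_bot_iff]
      intro y hy
      have hy' : ∀ x : H, (inner ℂ x (A y) : ℂ) = 0 := by
        intro x
        have h1 := hAsymm x y
        simp only [ContinuousLinearMap.coe_coe] at h1
        rw [← h1]
        exact (Submodule.mem_orthogonal _ y).mp hy (A x) ⟨x, rfl⟩
      have hAy : A y = 0 := by
        have := hy' (A y)
        exact inner_self_eq_zero.mp this
      have : A y = A 0 := by simpa using hAy
      exact hinj this
    have hcl : (LinearMap.range (A : H →ₗ[ℂ] H)).topologicalClosure = ⊤ := by
      rw [← Submodule.orthogonal_orthogonal_eq_closure, hbot, Submodule.bot_orthogonal_eq_top]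
    have : Dense ((LinearMap.range (A : H →ₗ[ℂ] H) : Submodule ℂ H) : Set H) := by
      rw [dense_iff_closure_eq, ← Submodule.topologicalClosure_coe, hcl]
      rfl
    simpa [LinearMap.coe_range] using this
  have hni : ¬ Function.Injective ⇑A := by
    intro hinj
    exact hzb (Or.inr (Or.inr ⟨hz, hinj, hdense hinj⟩))
  rw [Function.not_injective_iff] at hni
  obtain ⟨a, b, hab, hne⟩ := hni
  refine ⟨a - b, sub_ne_zero.mpr hne, ?_⟩
  have : A (a - b) = 0 := by rw [map_sub, sub_eq_zero]; exact hab
  have h2 : T (a - b) - z • (a - b) = 0 := by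
    simpa [hA, ContinuousLinearMap.sub_apply, ContinuousLinearMap.smul_apply,
      ContinuousLinearMap.one_apply] using this
  linear_combination (norm := module) h2

theorem stmt6 (T : H →L[ℂ] H) (hT : T.IsPositive) (β : ℝ)
    (hess : essSpec T = {(β : ℂ)})
    (hfin : {r : ℝ | r ∈ Set.Ioc β ‖T‖ ∧ (r : ℂ) ∈ pointSpec T}.Finite) :
    IsClosed (Set.range T) := by
  rcases subsingleton_or_nontrivial H with hH | hH
  · have hr : Set.range ⇑T = {0} := by
      ext y
      simp only [Set.mem_range, Set.mem_singleton_iff]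
      constructor
      · rintro ⟨x, rfl⟩; exact Subsingleton.elim _ _
      · rintro rfl; exact ⟨0, map_zero T⟩
    rw [hr]
    exact isClosed_singleton
  · have hsa := hT.isSelfAdjoint
    have heig : ∀ z ∈ spectrum ℂ T, z ≠ (β : ℂ) → z ∈ pointSpec T := by
      intro z hz hzb
      exact aux_spec_is_eig hsa hz (by rw [hess]; simpa using hzb)
    have hgap : ∃ δ > 0, ∀ x ∈ spectrum ℝ T, |x| < δ → x = 0 := by
      by_cases hβ : β = 0
      · subst hβ
        set s : Finset ℝ := insert 1 hfin.toFinset with hs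
        have hne : s.Nonempty := ⟨1, Finset.mem_insert_self _ _⟩
        refine ⟨s.min' hne, ?_, ?_⟩
        · rcases Finset.mem_insert.mp (s.min'_mem hne) with h1 | h2
          · rw [h1]; norm_num
          · exact ((Set.Finite.mem_toFinset hfin).mp h2).1.1
        · intro x hx hxδ
          by_contra hx0
          have hxC : (x : ℂ) ∈ spectrum ℂ T := by
            have := spectrum.algebraMap_mem ℂ hx
            simpa using this
          have hxP : (x : ℂ) ∈ pointSpec T := heig _ hxC (by exact_mod_cast hx0)
          have hxnn : 0 ≤ x := by
            have := aux_pointSpec_re_nonneg hT hxP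
            simpa using this
          have hxpos : 0 < x := lt_of_le_of_ne hxnn (Ne.symm hx0)
          have hxle : x ≤ ‖T‖ := by
            have h2 := spectrum.norm_le_norm_of_mem hxC
            calc x = |x| := (abs_of_nonneg hxnn).symm
              _ ≤ ‖T‖ := by simpa using h2
          have hmem : x ∈ {r : ℝ | r ∈ Set.Ioc (0:ℝ) ‖T‖ ∧ (r : ℂ) ∈ pointSpec T} :=
            ⟨⟨hxpos, hxle⟩, hxP⟩
          have hle : s.min' hne ≤ x :=
            s.min'_le x (Finset.mem_insert_of_mem ((Set.Finite.mem_toFinset hfin).mpr hmem))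
          rw [abs_of_nonneg hxnn] at hxδ
          linarith
      · by_contra hcon
        push_neg at hcon
        have h0 : (0 : ℂ) ∈ closure (pointSpec T \ {(0 : ℂ)}) := by
          rw [Metric.mem_closure_iff]
          intro ε hε
          obtain ⟨x, hx, hxδ, hx0⟩ := hcon (min ε |β|) (lt_min hε (abs_pos.mpr hβ))
          have hxC : (x : ℂ) ∈ spectrum ℂ T := by
            have := spectrum.algebraMap_mem ℂ hx
            simpa using this
          refine ⟨(x : ℂ), ⟨?_, ?_⟩, ?_⟩
          · apply heig _ hxC
            intro hxe
            have hxβ : x = β := by exact_mod_cast hxe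
            rw [hxβ] at hxδ
            have h3 : |β| < |β| := lt_of_lt_of_le hxδ (min_le_right ε |β|)
            exact lt_irrefl _ h3
          · simpa using hx0
          · have hd : dist (0 : ℂ) (x : ℂ) = |x| := by
              simp [Complex.dist_eq]
            rw [hd]
            exact lt_of_lt_of_le hxδ (min_le_left ε |β|)
        have h0e : (0 : ℂ) ∈ essSpec T := Or.inr (Or.inl h0)
        rw [hess] at h0e
        have : (0 : ℂ) = (β : ℂ) := h0e
        exact hβ (by exact_mod_cast this.symm)
    obtain ⟨δ, hδpos, hgap⟩ := hgap
    have hTnn : (0 : H →L[ℂ] H) ≤ T := (ContinuousLinearMap.nonneg_iff_isPositive T).mpr hT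
    have hpos : ∀ x ∈ spectrum ℝ T, 0 ≤ x := fun x hx => spectrum_nonneg_of_nonneg hTnn hx
    set f : ℝ → ℝ := fun x => if x < δ then 0 else x⁻¹ with hfdef
    have hfc : ContinuousOn f (spectrum ℝ T) := by
      intro x hx
      by_cases hx0 : x = 0
      · subst hx0
        have hev : ∀ᶠ y in nhdsWithin 0 (spectrum ℝ T), f y = f 0 := by
          filter_upwards [self_mem_nhdsWithin,
            nhdsWithin_le_nhds (Metric.ball_mem_nhds (0 : ℝ) hδpos)] with y hyS hyB
          have hyδ : |y| < δ := by simpa [Real.dist_eq] using hyB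
          rw [hgap y hyS hyδ]
        exact continuousWithinAt_const.congr_of_eventuallyEq hev rfl
      · have hδx : δ ≤ x := by
          by_contra hlt
          push_neg at hlt
          exact hx0 (hgap x hx (by rw [abs_of_nonneg (hpos x hx)]; exact hlt))
        have hxpos : 0 < x := lt_of_lt_of_le hδpos hδx
        have hev : ∀ᶠ y in nhdsWithin x (spectrum ℝ T), f y = y⁻¹ := by
          filter_upwards [self_mem_nhdsWithin,
            nhdsWithin_le_nhds (Metric.ball_mem_nhds x hxpos)] with y hyS hyB
          have hyδ : ¬ y < δ := by
            intro hyδ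
            have hy0 : y = 0 := hgap y hyS (by rw [abs_of_nonneg (hpos y hyS)]; exact hyδ)
            rw [hy0] at hyB
            have hc : x < x := by simpa [Real.dist_eq, abs_of_nonneg hxpos.le] using hyB
            exact lt_irrefl x hc
          simp [hfdef, hyδ]
        have hinv : ContinuousWithinAt (fun y : ℝ => y⁻¹) (spectrum ℝ T) x :=
          (continuousAt_inv₀ hxpos.ne').continuousWithinAt
        refine hinv.congr_of_eventuallyEq hev ?_
        simp [hfdef, not_lt.mpr hδx]
    have hid : Set.EqOn (fun r : ℝ => (id r * f r) * id r) id (spectrum ℝ T) := by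
      intro r hr
      by_cases hrδ : r < δ
      · have hr0 : r = 0 := hgap r hr (by rw [abs_of_nonneg (hpos r hr)]; exact hrδ)
        simp [hr0]
      · have hfr : f r = r⁻¹ := by simp [hfdef, hrδ]
        push_neg at hrδ
        have hr0 : r ≠ 0 := (lt_of_lt_of_le hδpos hrδ).ne'
        simp only [id_eq, hfr]
        field_simp
    have hTST : T * cfc f T * T = T := by
      calc T * cfc f T * T = cfc id T * cfc f T * cfc id T := by rw [cfc_id ℝ T hsa]
        _ = cfc (fun r : ℝ => (id r * f r) * id r) T := by
            rw [cfc_mul (fun r : ℝ => id r * f r) id T (continuousOn_id.mul hfc) continuousOn_id,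
              cfc_mul id f T continuousOn_id hfc]
        _ = cfc id T := cfc_congr hid
        _ = T := cfc_id ℝ T hsa
    set S := cfc f T with hSdef
    set P := T * S with hPdef
    have hPT : P * T = T := by rw [hPdef, hTST]
    have hrange : Set.range ⇑T = {x | P x = x} := by
      ext y
      constructor
      · rintro ⟨x, rfl⟩
        show P (T x) = T x
        have h2 : (P * T) x = T x := by rw [hPT]
        simpa [ContinuousLinearMap.mul_apply] using h2
      · intro hy
        refine ⟨S y, ?_⟩
        have h2 : P y = y := hy
        rw [hPdef] at h2
        simpa [ContinuousLinearMap.mul_apply] using h2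
    rw [hrange]
    exact isClosed_eq P.continuous continuous_id
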